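/- Let Σ be a symmetric positive definite 3×3 real matrix, μ ∈ ℝ³, o ∈ ℝ³ and r > 0, and suppose ‖μ − o‖ > r (the Gaussian mean lies outside the closed ball B = {x : ‖x − o‖ ≤ r}). If x_max ∈ B is a point at which the Gaussian density p(·; μ, Σ) attains its maximum over B, then ‖x_max − o‖ = r, and there exists λ ≥ 0 such that x_max = (Σ⁻¹ + λI)⁻¹(Σ⁻¹μ + λo). In particular, x_max lies on the one-parameter curve x(λ) = (Σ⁻¹ + λI)⁻¹(Σ⁻¹μ + λo), so it can be found by a one-dimensional search over λ. -/

import Mathlib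

open Matrix Real

/-- The Gaussian probability density with mean `μ` and covariance `S` on `ℝⁿ`. -/
noncomputable def gaussianDensity {n : ℕ} (S : Matrix (Fin n) (Fin n) ℝ)
    (μ : EuclideanSpace ℝ (Fin n)) (x : EuclideanSpace ℝ (Fin n)) : ℝ :=
  Real.exp (-(1/2) * ((x - μ) ⬝ᵥ (S⁻¹ *ᵥ (x - μ)))) / Real.sqrt ((2 * π) ^ n * S.det)

/-- Matrix–vector multiplication, viewed as a map on Euclidean space. -/
noncomputable def mulVecE {n : ℕ} (M : Matrix (Fin n) (Fin n) ℝ)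
    (x : EuclideanSpace ℝ (Fin n)) : EuclideanSpace ℝ (Fin n) :=
  (EuclideanSpace.equiv (Fin n) ℝ).symm (M *ᵥ x)

private lemma dot_symm3 (A : Matrix (Fin 3) (Fin 3) ℝ) (hA : Aᵀ = A) (u d : Fin 3 → ℝ) :
    u ⬝ᵥ (A *ᵥ d) = d ⬝ᵥ (A *ᵥ u) := by
  rw [Matrix.dotProduct_mulVec]
  nth_rewrite 1 [← hA]
  rw [Matrix.vecMul_transpose, dotProduct_comm]

private lemma key3 (A : Matrix (Fin 3) (Fin 3) ℝ) (hA : Aᵀ = A) (u d : Fin 3 → ℝ) (t : ℝ) :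
    (u + t • d) ⬝ᵥ (A *ᵥ (u + t • d))
      = u ⬝ᵥ (A *ᵥ u) + 2*t*(d ⬝ᵥ (A *ᵥ u)) + t^2*(d ⬝ᵥ (A *ᵥ d)) := by
  have h := dot_symm3 A hA u d
  simp only [Matrix.mulVec_add, Matrix.mulVec_smul, dotProduct_add, add_dotProduct,
    smul_dotProduct, dotProduct_smul, smul_eq_mul]
  rw [h]; ring

private lemma inner_eq_dot (a b : EuclideanSpace ℝ (Fin 3)) :
    (inner ℝ a b : ℝ) = (a : Fin 3 → ℝ) ⬝ᵥ (b : Fin 3 → ℝ) := by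
  simp [PiLp.inner_apply, RCLike.inner_apply, dotProduct, conj_trivial, mul_comm]

private def toF (x : EuclideanSpace ℝ (Fin 3)) : Fin 3 → ℝ := x

private lemma key3E (A : Matrix (Fin 3) (Fin 3) ℝ) (hA : Aᵀ = A)
    (u d : EuclideanSpace ℝ (Fin 3)) (t : ℝ) :
    ((u + t • d) ⬝ᵥ (A *ᵥ (u + t • d)) : ℝ)
      = u ⬝ᵥ (A *ᵥ u) + 2*t*(d ⬝ᵥ (A *ᵥ u)) + t^2*(d ⬝ᵥ (A *ᵥ d)) :=
  key3 A hA u d t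

set_option maxHeartbeats 2000000 in
/-- **Lemma 1 of the paper.** If the Gaussian mean `μ` lies outside the closed ball
`B = {x : ‖x − o‖ ≤ r}`, then any maximizer `x_max` of the Gaussian density over `B` lies on
the boundary sphere `‖x_max − o‖ = r`, and there exists a Lagrange multiplier `λ ≥ 0` with
`x_max = (Σ⁻¹ + λI)⁻¹ (Σ⁻¹ μ + λ o)`, so `x_max` lies on the one-parameter search curve
`x(λ)`. -/
theorem max_prob_point_on_search_curve
    (S : Matrix (Fin 3) (Fin 3) ℝ) (hS : S.PosDef)
    (μ o : EuclideanSpace ℝ (Fin 3)) (r : ℝ) (hr : 0 < r)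
    (hout : ‖μ - o‖ > r)
    (B : Set (EuclideanSpace ℝ (Fin 3))) (hB : B = Metric.closedBall o r)
    (xmax : EuclideanSpace ℝ (Fin 3)) (hmem : xmax ∈ B)
    (hmax : IsMaxOn (gaussianDensity S μ) B xmax) :
    ‖xmax - o‖ = r ∧
      ∃ l : ℝ, 0 ≤ l ∧
        xmax = mulVecE (S⁻¹ + l • (1 : Matrix (Fin 3) (Fin 3) ℝ))⁻¹ (mulVecE S⁻¹ μ + l • o) := by
  subst hB
  have hA : (S⁻¹).PosDef := hS.inv
  have hAsym : (S⁻¹)ᵀ = S⁻¹ := by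
    have h := hA.isHermitian
    rw [← Matrix.conjTranspose_eq_transpose_of_trivial]
    exact h
  have hdet : (0:ℝ) < S.det := hS.det_pos
  have hc : 0 < Real.sqrt ((2 * π) ^ 3 * S.det) := by
    apply Real.sqrt_pos.2
    have := Real.pi_pos
    positivity
  have hQmin : ∀ y ∈ Metric.closedBall o r,
      ((xmax - μ) ⬝ᵥ (S⁻¹ *ᵥ (xmax - μ)) : ℝ) ≤ (y - μ) ⬝ᵥ (S⁻¹ *ᵥ (y - μ)) := by
    intro y hy
    have h := hmax hy
    simp only [gaussianDensity, Set.mem_setOf_eq] at h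
    rw [div_le_div_iff_of_pos_right hc] at h
    have h2 := Real.exp_le_exp.1 h
    linarith
  have hmem' : ‖xmax - o‖ ≤ r := by
    simpa [Metric.mem_closedBall, dist_eq_norm] using hmem
  have hune : (xmax - μ) ≠ (0 : EuclideanSpace ℝ (Fin 3)) := by
    intro h
    have hx : xmax = μ := sub_eq_zero.1 h
    rw [hx] at hmem'
    linarith
  have hgd : (0:ℝ) < (xmax - μ) ⬝ᵥ (S⁻¹ *ᵥ (xmax - μ)) := by
    have h := hA.dotProduct_mulVec_pos (x := toF (xmax - μ)) (fun h0 => hune ((WithLp.ofLp_eq_zero (x := xmax - μ)).1 h0))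
    simpa [toF] using h
  set g : EuclideanSpace ℝ (Fin 3) := mulVecE S⁻¹ (xmax - μ) with hgdef
  have hgcoe : ∀ a : EuclideanSpace ℝ (Fin 3),
      (inner ℝ a g : ℝ) = (a : Fin 3 → ℝ) ⬝ᵥ (S⁻¹ *ᵥ (xmax - μ)) := by
    intro a
    exact inner_eq_dot a g
  have hg0 : g ≠ 0 := by
    intro h
    have h2 : (inner ℝ (xmax - μ) g : ℝ) = 0 := by rw [h, inner_zero_right]
    rw [hgcoe] at h2
    linarith
  -- first-order condition
  have hfo : ∀ y ∈ Metric.closedBall o r,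
      (0:ℝ) ≤ (y - xmax) ⬝ᵥ (S⁻¹ *ᵥ (xmax - μ)) := by
    intro y hy
    by_contra hneg
    push_neg at hneg
    set s : ℝ := (y - xmax) ⬝ᵥ (S⁻¹ *ᵥ (xmax - μ)) with hs
    set c2 : ℝ := (y - xmax) ⬝ᵥ (S⁻¹ *ᵥ (y - xmax)) with hc2
    have hc2nn : (0:ℝ) ≤ c2 := by
      rcases eq_or_ne (y - xmax) (0 : EuclideanSpace ℝ (Fin 3)) with h | h
      · rw [hc2, h]; simp
      · rw [hc2]
        exact le_of_lt (by simpa [toF] using hA.dotProduct_mulVec_pos (x := toF (y - xmax)) (fun h0 => h ((WithLp.ofLp_eq_zero (x := y - xmax)).1 h0)))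
    set t : ℝ := min 1 (-s / (c2 + 1)) with ht
    have ht0 : 0 < t := lt_min one_pos (div_pos (by linarith) (by linarith))
    have ht1 : t ≤ 1 := min_le_left _ _
    have htb : t ≤ -s / (c2 + 1) := min_le_right _ _
    have htb' : t * (c2 + 1) ≤ -s := by
      rw [← le_div_iff₀ (by positivity)]
      exact htb
    set z : EuclideanSpace ℝ (Fin 3) := xmax + t • (y - xmax) with hz
    have hzmem : z ∈ Metric.closedBall o r := by
      have hzc : z = (1 - t) • xmax + t • y := by rw [hz]; module
      rw [hzc]
      exact convex_closedBall o r hmem hy (by linarith) (le_of_lt ht0) (by ring)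
    have hQz := hQmin z hzmem
    have hzsub : z - μ = (xmax - μ) + t • (y - xmax) := by rw [hz]; module
    simp only [WithLp.ofLp_sub] at hQz hs hc2
    have hv : z.ofLp - μ.ofLp = (xmax.ofLp - μ.ofLp) + t • (y.ofLp - xmax.ofLp) := by
      rw [hz]; funext i
      simp only [WithLp.ofLp_add, WithLp.ofLp_smul, WithLp.ofLp_sub, Pi.add_apply, Pi.sub_apply,
        Pi.smul_apply, smul_eq_mul]
      ring
    rw [hv, key3 S⁻¹ hAsym _ _ t, ← hs, ← hc2] at hQz
    have h4 : (0:ℝ) ≤ 2*s + t*c2 := by nlinarith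
    nlinarith
  -- the boundary point and multiplier
  set ng : ℝ := ‖g‖ with hng
  have hngpos : 0 < ng := norm_pos_iff.2 hg0
  set ystar : EuclideanSpace ℝ (Fin 3) := o - (r / ng) • g with hys
  have hysmem : ystar ∈ Metric.closedBall o r := by
    have h1 : ystar - o = -((r / ng) • g) := by rw [hys]; module
    have h2 : ‖ystar - o‖ = r := by
      rw [h1, norm_neg, norm_smul, Real.norm_eq_abs, abs_of_pos (by positivity)]
      field_simp
      exact hng.symm
    simp [Metric.mem_closedBall, dist_eq_norm, h2]
  have hfo_inner : ∀ y ∈ Metric.closedBall o r, (0:ℝ) ≤ inner ℝ (y - xmax) g := by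
    intro y hy
    rw [hgcoe]
    exact hfo y hy
  have hystar := hfo_inner ystar hysmem
  have hysub : ystar - xmax = (o - xmax) - (r / ng) • g := by rw [hys]; module
  rw [hysub, inner_sub_left, real_inner_smul_left, real_inner_self_eq_norm_mul_norm] at hystar
  have hkey : r * ng ≤ (inner ℝ (o - xmax) g : ℝ) := by
    have : r / ng * (ng * ng) = r * ng := by field_simp
    linarith [hystar, this.symm ▸ hystar]
  have hcs : (inner ℝ (o - xmax) g : ℝ) ≤ ‖o - xmax‖ * ng := real_inner_le_norm _ _
  have hnorm_ox : ‖o - xmax‖ ≤ r := by rw [norm_sub_rev]; exact hmem'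
  have hbd : ‖xmax - o‖ = r := by
    rw [norm_sub_rev]
    have h1 : r ≤ ‖o - xmax‖ := by
      by_contra h
      push_neg at h
      nlinarith
    linarith
  have hio : (inner ℝ (o - xmax) g : ℝ) = r * ng := by
    have h2 : ‖o - xmax‖ = r := by rw [norm_sub_rev] at hbd ⊢; rw [norm_sub_rev]; exact hbd
    nlinarith [hcs, hkey]
  refine ⟨hbd, ng / r, by positivity, ?_⟩
  set l : ℝ := ng / r with hl
  have hgl : g = l • (o - xmax) := by
    have hno : ‖o - xmax‖ = r := by rw [norm_sub_rev]; exact hbd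
    have hz : ‖g - l • (o - xmax)‖ ^ 2 = 0 := by
      rw [norm_sub_sq_real, real_inner_smul_right, norm_smul, Real.norm_eq_abs,
        abs_of_pos (by positivity), hno, real_inner_comm, hio]
      rw [mul_pow]
      have : ‖g‖ = ng := rfl
      rw [this, hl]
      field_simp
      ring
    have hz0 : ‖g - l • (o - xmax)‖ = 0 :=
      pow_eq_zero_iff (by norm_num : (2:ℕ) ≠ 0) |>.mp hz
    exact sub_eq_zero.1 (norm_eq_zero.1 hz0)
  -- matrix computation
  have hMpos : (S⁻¹ + l • (1 : Matrix (Fin 3) (Fin 3) ℝ)).PosDef := by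
    apply hA.add
    rw [Matrix.smul_one_eq_diagonal]
    exact Matrix.PosDef.diagonal (fun _ => by positivity)
  have hMdet : (S⁻¹ + l • (1 : Matrix (Fin 3) (Fin 3) ℝ)).det ≠ 0 := ne_of_gt hMpos.det_pos
  have hfun : ∀ i, (S⁻¹ *ᵥ (xmax - μ)) i = l * ((o : Fin 3 → ℝ) i - (xmax : Fin 3 → ℝ) i) := by
    intro i
    have h := congrArg (fun v : EuclideanSpace ℝ (Fin 3) => v i) hgl
    simpa [hgdef, mulVecE, PiLp.smul_apply, PiLp.sub_apply, smul_eq_mul] using h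
  have hcast : S⁻¹ *ᵥ (xmax - μ) = S⁻¹ *ᵥ (toF xmax - toF μ) := rfl
  have hMx : (S⁻¹ + l • (1 : Matrix (Fin 3) (Fin 3) ℝ)) *ᵥ toF xmax
      = S⁻¹ *ᵥ toF μ + l • toF o := by
    funext i
    have h := hfun i
    rw [hcast, Matrix.mulVec_sub] at h
    simp only [toF] at h ⊢
    simp only [Matrix.add_mulVec, Matrix.smul_mulVec, Matrix.one_mulVec,
      Pi.add_apply, Pi.sub_apply, Pi.smul_apply, smul_eq_mul] at h ⊢
    linarith
  have hfin : (S⁻¹ + l • (1 : Matrix (Fin 3) (Fin 3) ℝ))⁻¹ *ᵥ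
      (S⁻¹ *ᵥ toF μ + l • toF o) = toF xmax := by
    rw [← hMx, Matrix.mulVec_mulVec, Matrix.nonsing_inv_mul _ (Ne.isUnit hMdet), Matrix.one_mulVec]
  exact WithLp.ofLp_injective (p := 2) hfin.symm
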